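/- Let X be an n×n real matrix and T(Z) = [Xᵀ,[X,Z]]. If T(Y) = αY for some α ∈ ℝ, then T([Xᵀ, Yᵀ]) = α[Xᵀ, Yᵀ]. -/
import Mathlib

open Matrix

theorem stmt_14 (n : ℕ) (X Y : Matrix (Fin n) (Fin n) ℝ) (α : ℝ)
    (hY : Xᵀ * (X * Y - Y * X) - (X * Y - Y * X) * Xᵀ = α • Y) :
    Xᵀ * (X * (Xᵀ * Yᵀ - Yᵀ * Xᵀ) - (Xᵀ * Yᵀ - Yᵀ * Xᵀ) * X)
      - (X * (Xᵀ * Yᵀ - Yᵀ * Xᵀ) - (Xᵀ * Yᵀ - Yᵀ * Xᵀ) * X) * Xᵀ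
      = α • (Xᵀ * Yᵀ - Yᵀ * Xᵀ) := by
  have ht := congrArg Matrix.transpose hY
  simp only [Matrix.transpose_sub, Matrix.transpose_mul, Matrix.transpose_smul,
    Matrix.transpose_transpose] at ht
  have h : X * (Xᵀ * Yᵀ - Yᵀ * Xᵀ) - (Xᵀ * Yᵀ - Yᵀ * Xᵀ) * X = α • Yᵀ := by
    rw [← ht]; noncomm_ring
  rw [h]
  simp [Matrix.mul_smul, Matrix.smul_mul, smul_sub]
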